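/- Let R be a two-dimensional excellent normal local ring and φ : X → Spec(R) a resolution of singularities. Suppose D_1 ≤ D_2 are effective divisors on X with exceptional support, with respective anti-nef parts Δ_1 and Δ_2 of their Zariski decompositions. Then (Δ_2²) ≤ (Δ_1²), with equality if and only if Δ_1 = Δ_2. -/

import Mathlib

universe u

open Filter IsLocalRing

/-- The length of an `R`-module `M`: the supremum of the lengths of chains of submodules. -/
noncomputable def moduleLength (R : Type*) [Ring R] (M : Type*) [AddCommGroup M]
    [Module R M] : WithBot ℕ∞ :=
  Order.krullDim (Submodule R M)

/-- The length of an `R`-module as a real number (junk value if the length is infinite). -/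
noncomputable def rlen (R : Type*) [Ring R] (M : Type*) [AddCommGroup M] [Module R M] : ℝ :=
  (WithBot.unbotD 0 (moduleLength R M)).toNat

/-- A Noetherian local ring is *regular* if its maximal ideal can be generated by
`dim R` elements. -/
def IsRegularLocalRing' (A : Type u) [CommRing A] : Prop :=
  IsNoetherianRing A ∧ IsLocalRing A ∧
    ∃ n : ℕ, ringKrullDim A = n ∧ ∃ f : Fin n → A,
      (Ideal.span (Set.range f)).IsMaximal

/-- A commutative ring is *regular* if it is Noetherian and all of its localizations
at prime ideals are regular local rings. -/
def IsRegularRing' (A : Type u) [CommRing A] : Prop :=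
  IsNoetherianRing A ∧ ∀ (p : Ideal A) (hp : p.IsPrime),
    haveI := hp
    IsRegularLocalRing' (Localization.AtPrime p)

/-- An algebra `A` over a field `k` is *geometrically regular* if `L ⊗ₖ A` is a regular ring
for every finite field extension `L` of `k`. -/
def IsGeometricallyRegular (k A : Type u) [Field k] [CommRing A] [Algebra k A] : Prop :=
  ∀ (L : Type u) [Field L] [Algebra k L], Module.Finite k L →
    IsRegularRing' (TensorProduct k L A)

/-- A chain of primes is saturated if no further prime can be inserted. -/
def SaturatedChain {α : Type*} [Preorder α] (c : LTSeries α) : Prop :=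
  ∀ i : Fin c.length, ∀ x, ¬ (c.toFun i.castSucc < x ∧ x < c.toFun i.succ)

/-- A ring is catenary if any two saturated chains of prime ideals with the same endpoints
have the same length. -/
def IsCatenary (A : Type u) [CommRing A] : Prop :=
  ∀ c₁ c₂ : LTSeries (PrimeSpectrum A),
    c₁.head = c₂.head → c₁.last = c₂.last →
      SaturatedChain c₁ → SaturatedChain c₂ → c₁.length = c₂.length

/-- The formal fibres of a Noetherian local ring are geometrically regular if for every prime
`p` the fibre `κ(p) ⊗_R R̂` of the completion map over `p` is geometrically regular over the
residue field `κ(p) = Frac(R/p)`. -/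
def HasGeomRegularFormalFibres (R : Type u) [CommRing R] [IsLocalRing R] : Prop :=
  ∀ (p : Ideal R) (hp : p.IsPrime),
    haveI := hp
    IsGeometricallyRegular (FractionRing (R ⧸ p))
      (TensorProduct R (FractionRing (R ⧸ p))
        (AdicCompletion (IsLocalRing.maximalIdeal R) R))

/-- A Noetherian local ring is *excellent* if it is universally catenary and its formal fibres
are geometrically regular (for local rings this recovers the usual definition of an excellent
ring, since a semilocal ring with geometrically regular formal fibres is J-2). -/
class IsExcellentLocalRing (R : Type u) [CommRing R] [IsLocalRing R] : Prop where
  noetherian : IsNoetherianRing R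
  universallyCatenary : ∀ n : ℕ, IsCatenary (MvPolynomial (Fin n) R)
  geomRegularFormalFibres : HasGeomRegularFormalFibres R

/-- The data of a resolution of singularities `φ : X → Spec R` of a two-dimensional local
domain: the divisorial valuations `μ i` of the prime exceptional curves `E₁, …, E_s` together
with their (negative definite) intersection matrix `Q i j = (E_i · E_j)`. -/
structure ResolutionData (R : Type u) [CommRing R] [IsDomain R] [IsLocalRing R] where
  /-- the number of prime exceptional curves -/
  s : ℕ
  /-- the divisorial valuation of each prime exceptional curve, restricted to `R` -/
  μ : Fin s → R → ℕ∞
  μ_top : ∀ i x, μ i x = ⊤ ↔ x = 0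
  μ_mul : ∀ i x y, μ i (x * y) = μ i x + μ i y
  μ_add : ∀ i x y, min (μ i x) (μ i y) ≤ μ i (x + y)
  μ_one : ∀ i, μ i 1 = 0
  /-- the exceptional curves all contract to the closed point `m_R` -/
  μ_max : ∀ i, ∀ x ∈ IsLocalRing.maximalIdeal R, x ≠ 0 → 0 < μ i x
  /-- the intersection matrix `(E_i · E_j)` of the exceptional curves -/
  Q : Matrix (Fin s) (Fin s) ℚ
  Q_symm : Q.IsSymm
  /-- the intersection matrix is negative definite -/
  Q_negdef : ∀ v : Fin s → ℚ, v ≠ 0 → ∑ i, ∑ j, v i * Q i j * v j < 0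
  /-- the exceptional part `Σᵢ μᵢ(f) Eᵢ` of the divisor of `0 ≠ f ∈ R` is anti-nef
  (since `((f) · E_j) = 0` and the remaining part of `(f)` is effective) -/
  principal_antinef : ∀ x : R, x ≠ 0 → ∀ j, ∑ i, ((μ i x).toNat : ℚ) * Q i j ≤ 0

variable {R : Type u} [CommRing R] [IsDomain R] [IsLocalRing R]

/-- For the effective divisor `F = Σᵢ aᵢ Eᵢ` with exceptional support, the ideal
`I(F) = Γ(X, O_X(-F)) ∩ R = {f ∈ R ∣ μᵢ(f) ≥ aᵢ for all i}` (equal to `Γ(X, O_X(-F))`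
when `R` is normal). -/
def ResolutionData.idl (X : ResolutionData R) (a : Fin X.s → ℕ) : Ideal R where
  carrier := {f | ∀ i, (a i : ℕ∞) ≤ X.μ i f}
  zero_mem' := by
    intro i
    simp [(X.μ_top i 0).mpr rfl]
  add_mem' := by
    intro x y hx hy i
    exact le_trans (le_min (hx i) (hy i)) (X.μ_add i x y)
  smul_mem' := by
    intro c x hx i
    rw [smul_eq_mul, X.μ_mul i c x]
    exact (hx i).trans (self_le_add_left _ _)

/-- The intersection product `(Σᵢ vᵢ Eᵢ · Σⱼ wⱼ Eⱼ)` of exceptional `ℚ`-divisors. -/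
def ResolutionData.inter (X : ResolutionData R) (v w : Fin X.s → ℚ) : ℚ :=
  ∑ i, ∑ j, v i * X.Q i j * w j

/-- An exceptional `ℚ`-divisor `C` is anti-nef if `(C · E_j) ≤ 0` for all exceptional
curves `E_j`. -/
def ResolutionData.AntiNef (X : ResolutionData R) (v : Fin X.s → ℚ) : Prop :=
  ∀ j, ∑ i, v i * X.Q i j ≤ 0

/-- `Δ` is the anti-nef part of the Zariski decomposition of the effective exceptional
divisor `D`: the unique minimal effective anti-nef `ℚ`-divisor with `D ≤ Δ`. -/
def ResolutionData.IsAntiNefPart (X : ResolutionData R) (D Δ : Fin X.s → ℚ) : Prop :=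
  (∀ i, 0 ≤ Δ i) ∧ X.AntiNef Δ ∧ (∀ i, D i ≤ Δ i) ∧
    ∀ Δ' : Fin X.s → ℚ, (∀ i, 0 ≤ Δ' i) → X.AntiNef Δ' → (∀ i, D i ≤ Δ' i) →
      ∀ i, Δ i ≤ Δ' i

/-- **Corollary 5.3.**  Let `R` be a two-dimensional excellent normal local
ring and `φ : X → Spec R` a resolution of singularities.  If `D₁ ≤ D₂` are effective divisors
on `X` with exceptional support, with respective anti-nef parts `Δ₁`, `Δ₂` of their Zariski
decompositions, then `(Δ₂²) ≤ (Δ₁²)`, with equality if and only if `Δ₁ = Δ₂`. -/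
theorem antiNefPart_self_inter_le
    [IsIntegrallyClosed R] [IsExcellentLocalRing R]
    (hd : ringKrullDim R = 2)
    (X : ResolutionData R)
    (D₁ D₂ : Fin X.s → ℕ) (hle : ∀ i, D₁ i ≤ D₂ i)
    (Δ₁ Δ₂ : Fin X.s → ℚ)
    (h₁ : X.IsAntiNefPart (fun i => (D₁ i : ℚ)) Δ₁)
    (h₂ : X.IsAntiNefPart (fun i => (D₂ i : ℚ)) Δ₂) :
    X.inter Δ₂ Δ₂ ≤ X.inter Δ₁ Δ₁ ∧ (X.inter Δ₂ Δ₂ = X.inter Δ₁ Δ₁ ↔ Δ₁ = Δ₂) := by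
  -- symmetry of the intersection pairing
  have symm : ∀ v w, X.inter v w = X.inter w v := by
    intro v w
    rw [ResolutionData.inter, ResolutionData.inter, Finset.sum_comm]
    refine Finset.sum_congr rfl fun i _ => Finset.sum_congr rfl fun j _ => ?_
    rw [X.Q_symm.apply i j]; ring
  -- pairing an anti-nef divisor with an effective divisor is nonpositive
  have pair : ∀ v w, X.AntiNef v → (∀ i, 0 ≤ w i) → X.inter v w ≤ 0 := by
    intro v w hv hw
    have hrw : X.inter v w = ∑ j, (∑ i, v i * X.Q i j) * w j := by
      rw [ResolutionData.inter, Finset.sum_comm]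
      exact Finset.sum_congr rfl fun j _ => (Finset.sum_mul _ _ _).symm
    rw [hrw]
    exact Finset.sum_nonpos fun j _ => mul_nonpos_of_nonpos_of_nonneg (hv j) (hw j)
  -- Δ₁ ≤ Δ₂ by minimality
  have hΔle : ∀ i, Δ₁ i ≤ Δ₂ i := by
    refine h₁.2.2.2 Δ₂ h₂.1 h₂.2.1 fun i => ?_
    exact le_trans (by exact_mod_cast Nat.cast_le.mpr (hle i)) (h₂.2.2.1 i)
  set B : Fin X.s → ℚ := fun i => Δ₂ i - Δ₁ i with hB
  have hBnn : ∀ i, 0 ≤ B i := fun i => sub_nonneg.mpr (hΔle i)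
  have key : X.inter Δ₂ Δ₂ = X.inter Δ₁ Δ₁ + X.inter Δ₁ B + X.inter B Δ₂ := by
    simp only [ResolutionData.inter, ← Finset.sum_add_distrib]
    refine Finset.sum_congr rfl fun i _ => Finset.sum_congr rfl fun j _ => ?_
    simp only [hB]; ring
  have t1 : X.inter Δ₁ B ≤ 0 := pair Δ₁ B h₁.2.1 hBnn
  have t2 : X.inter B Δ₂ ≤ 0 := by
    rw [symm]; exact pair Δ₂ B h₂.2.1 hBnn
  constructor
  · linarith
  constructor
  · intro heq
    have e1 : X.inter Δ₁ B = 0 := by linarith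
    have e2 : X.inter B Δ₂ = 0 := by linarith
    have keyB : X.inter B B = X.inter B Δ₂ - X.inter B Δ₁ := by
      simp only [ResolutionData.inter, ← Finset.sum_sub_distrib]
      refine Finset.sum_congr rfl fun i _ => Finset.sum_congr rfl fun j _ => ?_
      simp only [hB]; ring
    have hBB : X.inter B B = 0 := by
      rw [keyB, symm B Δ₁, e1, e2, sub_zero]
    have hB0 : B = 0 := by
      by_contra h
      have := X.Q_negdef B h
      rw [show (∑ i, ∑ j, B i * X.Q i j * B j) = X.inter B B from rfl, hBB] at this
      exact lt_irrefl 0 this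
    funext i
    have := congrFun hB0 i
    simp only [hB, Pi.zero_apply, sub_eq_zero] at this
    exact this.symm
  · rintro rfl; rfl
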